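/- Let Γ be a connected sesqui-regular graph with parameters (n,k,k) (i.e., any two vertices at distance 2 have exactly k common neighbors, where k is the valency) and smallest eigenvalue in [-3,-2). Then Γ is the complete multipartite graph K_{(n/3)×3}, i.e., the complement of a disjoint union of triangles. -/

import Mathlib

open Finset Matrix SimpleGraph

lemma adjMatrix_isHermitian {V : Type*} [Fintype V] [DecidableEq V] (G : SimpleGraph V)
    [DecidableRel G.Adj] : (G.adjMatrix ℝ).IsHermitian := by
  rw [Matrix.IsHermitian, Matrix.conjTranspose]
  show _ = _
  ext i j
  simp [SimpleGraph.adjMatrix, Matrix.transpose_apply, SimpleGraph.adj_comm]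

/-- The smallest eigenvalue of (the adjacency matrix of) a finite simple graph. -/
noncomputable def minEig {V : Type*} [Fintype V] [DecidableEq V] (G : SimpleGraph V) : ℝ :=
  letI := Classical.decRel G.Adj
  ⨅ i, (adjMatrix_isHermitian G).eigenvalues i


lemma step_dist {V : Type*} (G : SimpleGraph V) (hconn : G.Connected) (x y : V) (d : ℕ)
    (h : G.dist x y = d + 1) : ∃ z, G.Adj x z ∧ G.dist z y = d := by
  obtain ⟨p, hp⟩ := hconn.exists_walk_length_eq_dist x y
  rw [h] at hp
  cases p with
  | nil => simp at hp
  | cons hadj q =>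
    rename_i z
    refine ⟨z, hadj, le_antisymm ?_ ?_⟩
    · have := G.dist_le q
      simp [SimpleGraph.Walk.length_cons] at hp
      omega
    · have htri := hconn.dist_triangle (u := x) (v := z) (w := y)
      have h1 : G.dist x z ≤ 1 := G.dist_le (SimpleGraph.Walk.cons hadj SimpleGraph.Walk.nil)
      omega

lemma nbr_eq_of_dist_two {V : Type*} [Fintype V] (G : SimpleGraph V) (k : ℕ)
    (hreg : ∀ x : V, (G.neighborSet x).ncard = k)
    (hsesqui : ∀ x y : V, G.dist x y = 2 → (G.neighborSet x ∩ G.neighborSet y).ncard = k)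
    (x y : V) (h : G.dist x y = 2) : G.neighborSet x = G.neighborSet y := by
  have key : ∀ a b : V, G.dist a b = 2 → G.neighborSet a ⊆ G.neighborSet b := by
    intro a b hab
    have h1 := hsesqui a b hab
    have h2 : G.neighborSet a ∩ G.neighborSet b = G.neighborSet a :=
      Set.eq_of_subset_of_ncard_le Set.inter_subset_left (by rw [h1, hreg]) (Set.toFinite _)
    rw [← h2]; exact Set.inter_subset_right
  exact subset_antisymm (key x y h) (key y x (by rwa [G.dist_comm]))

lemma diam_le_two {V : Type*} [Fintype V] (G : SimpleGraph V) (k : ℕ)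
    (hconn : G.Connected)
    (hreg : ∀ x : V, (G.neighborSet x).ncard = k)
    (hsesqui : ∀ x y : V, G.dist x y = 2 → (G.neighborSet x ∩ G.neighborSet y).ncard = k)
    (x y : V) : G.dist x y ≤ 2 := by
  by_contra hgt
  push_neg at hgt
  obtain ⟨d, hd⟩ : ∃ d : ℕ, G.dist x y = d + 3 := ⟨G.dist x y - 3, by omega⟩
  obtain ⟨z, hxz, hz⟩ := step_dist G hconn x y _ hd
  obtain ⟨w, hzw, hw⟩ := step_dist G hconn z y _ hz
  obtain ⟨w', hww', hw'⟩ := step_dist G hconn w y _ hw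
  have htri1 := hconn.dist_triangle (u := x) (v := w) (w := y)
  have hxw2 : G.dist x w = 2 := by
    have hle : G.dist x w ≤ 2 :=
      G.dist_le (SimpleGraph.Walk.cons hxz (SimpleGraph.Walk.cons hzw SimpleGraph.Walk.nil))
    omega
  have hN := nbr_eq_of_dist_two G k hreg hsesqui x w hxw2
  have hxw' : G.Adj x w' := by
    have : w' ∈ G.neighborSet w := hww'
    rw [← hN] at this; exact this
  have htri2 := hconn.dist_triangle (u := x) (v := w') (w := y)
  have : G.dist x w' ≤ 1 := G.dist_le (SimpleGraph.Walk.cons hxw' SimpleGraph.Walk.nil)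
  omega

lemma matrix_identity {V : Type*} [Fintype V] [DecidableEq V]
    (A J B : Matrix V V ℝ) (nr kr pr : ℝ)
    (hA : A = J - B)
    (hJJ : J * J = nr • J) (hBJ : B * J = pr • J) (hJB : J * B = pr • J)
    (hBB : B * B = pr • B) (hn : nr = kr + pr) :
    (A + pr • 1) * ((A - kr • 1) * A) = 0 := by
  subst hA hn
  simp only [sub_mul, mul_sub, add_mul, mul_add, smul_mul_assoc, mul_smul_comm, one_mul, mul_one,
    hJJ, hBJ, hJB, hBB, smul_sub, smul_add, smul_smul]
  module

lemma eig_root {V : Type*} [Fintype V] [DecidableEq V] (A : Matrix V V ℝ)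
    (hA : A.IsHermitian) (i : V) (k p : ℝ)
    (h0 : (A + p • 1) * ((A - k • 1) * A) = 0) :
    (hA.eigenvalues i + p) * ((hA.eigenvalues i - k) * hA.eigenvalues i) = 0 := by
  set μ := hA.eigenvalues i with hμ
  set v : V → ℝ := ⇑(hA.eigenvectorBasis i) with hv
  have e1 : A *ᵥ v = μ • v := hA.mulVec_eigenvectorBasis i
  have e2 : ((A + p • 1) * ((A - k • 1) * A)) *ᵥ v = ((μ + p) * ((μ - k) * μ)) • v := by
    rw [← Matrix.mulVec_mulVec, ← Matrix.mulVec_mulVec, e1]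
    simp only [Matrix.add_mulVec, Matrix.sub_mulVec, Matrix.mulVec_sub, Matrix.mulVec_smul, e1, Matrix.smul_mulVec,
      Matrix.one_mulVec, smul_smul, smul_sub, sub_smul, add_smul]
    module
  rw [h0, Matrix.zero_mulVec] at e2
  have hvne : v ≠ 0 := by
    have := hA.eigenvectorBasis.orthonormal.ne_zero i
    intro hc
    apply this
    ext j
    exact congrFun hc j
  rcases smul_eq_zero.mp e2.symm with h | h
  · exact h
  · exact absurd h hvne
theorem sesqui_c_eq_k {V : Type*} [Fintype V] [DecidableEq V] (G : SimpleGraph V) (n k : ℕ)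
    (hn : Fintype.card V = n)
    (hconn : G.Connected)
    (hreg : ∀ x : V, (G.neighborSet x).ncard = k)
    (hsesqui : ∀ x y : V, G.dist x y = 2 → (G.neighborSet x ∩ G.neighborSet y).ncard = k)
    (heig : minEig G ∈ Set.Ico (-3 : ℝ) (-2)) :
    ∃ m : ℕ, n = 3 * m ∧
      Nonempty (G ≃g SimpleGraph.completeMultipartiteGraph (fun _ : Fin m => Fin 3)) := by
  letI : DecidableRel G.Adj := Classical.decRel G.Adj
  haveI : Nonempty V := hconn.nonempty
  -- transitivity of non-adjacency
  have htrans : ∀ x y z : V, ¬G.Adj x y → ¬G.Adj y z → ¬G.Adj x z := by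
    intro x y z hxy hyz hxz
    rcases eq_or_ne x y with rfl | hne1
    · exact hyz hxz
    rcases eq_or_ne y z with rfl | hne2
    · exact hxy hxz
    have hd : G.dist x y = 2 := by
      have h2 := diam_le_two G k hconn hreg hsesqui x y
      have h0 : G.dist x y ≠ 0 := fun h => hne1 (hconn.dist_eq_zero_iff.mp h)
      have h1 : G.dist x y ≠ 1 := fun h => hxy (SimpleGraph.dist_eq_one_iff_adj.mp h)
      omega
    have hN := nbr_eq_of_dist_two G k hreg hsesqui x y hd
    exact hyz (hN ▸ hxz : z ∈ G.neighborSet y)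
  -- degree as a finset card
  have hk : ∀ x : V, (univ.filter (fun y => G.Adj x y)).card = k := by
    intro x
    have := hreg x
    rw [Set.ncard_eq_toFinset_card'] at this
    rw [← this]
    congr 1
    ext y
    simp [Set.mem_toFinset, SimpleGraph.mem_neighborSet]
  set p : ℕ := n - k with hp
  have hkn : ∀ x : V, (univ.filter (fun y => G.Adj x y)).card
      + (univ.filter (fun y => ¬ G.Adj x y)).card = n := by
    intro x
    rw [Finset.card_filter_add_card_filter_not, Finset.card_univ, hn]
  have hkp : k + p = n := by
    have := hkn (Classical.arbitrary V)
    rw [hk] at this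
    omega
  have hpcard : ∀ x : V, (univ.filter (fun y => ¬ G.Adj x y)).card = p := by
    intro x
    have h1 := hkn x
    rw [hk] at h1
    omega
  -- matrices
  set A : Matrix V V ℝ := G.adjMatrix ℝ with hAdef
  set J : Matrix V V ℝ := Matrix.of (fun _ _ => (1 : ℝ)) with hJdef
  set B : Matrix V V ℝ := Matrix.of (fun x y => if G.Adj x y then 0 else 1) with hBdef
  have hAJB : A = J - B := by
    ext x y
    simp only [hAdef, hJdef, hBdef, SimpleGraph.adjMatrix_apply, Matrix.sub_apply, Matrix.of_apply]
    split_ifs <;> norm_num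
  have hJJ : J * J = (n : ℝ) • J := by
    ext x y
    simp [hJdef, Matrix.mul_apply, hn]
  have hrowB : ∀ x : V, ∑ z, B x z = (p : ℝ) := by
    intro x
    rw [← hpcard x]
    simp only [hBdef, Matrix.of_apply]
    rw [Finset.sum_ite, Finset.sum_const, Finset.sum_const]
    simp
  have hcolB : ∀ y : V, ∑ z, B z y = (p : ℝ) := by
    intro y
    rw [← hrowB y]
    apply Finset.sum_congr rfl
    intro z _
    simp only [hBdef, Matrix.of_apply, G.adj_comm]
  have hBJ : B * J = (p : ℝ) • J := by
    ext x y
    simp only [Matrix.mul_apply, hJdef, Matrix.of_apply, mul_one, Matrix.smul_apply, smul_eq_mul]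
    rw [hrowB x]
  have hJB : J * B = (p : ℝ) • J := by
    ext x y
    simp only [Matrix.mul_apply, hJdef, Matrix.of_apply, one_mul, Matrix.smul_apply, smul_eq_mul]
    rw [hcolB y]
    ring
  have hBB : B * B = (p : ℝ) • B := by
    ext x y
    simp only [Matrix.mul_apply, hBdef, Matrix.of_apply, Matrix.smul_apply, smul_eq_mul]
    by_cases hxy : G.Adj x y
    · rw [if_pos hxy]
      have hz : ∀ z ∈ univ, (if G.Adj x z then (0:ℝ) else 1) * (if G.Adj z y then 0 else 1)
          = 0 := by
        intro z _
        by_cases hxz : G.Adj x z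
        · rw [if_pos hxz, zero_mul]
        · rw [if_neg hxz, if_pos, mul_zero]
          by_contra hzy
          exact htrans x z y hxz hzy hxy
      rw [Finset.sum_eq_zero hz, mul_zero]
    · rw [if_neg hxy]
      have hthis : ∀ z : V, ((if G.Adj x z then (0:ℝ) else 1) * if G.Adj z y then 0 else 1)
          = if G.Adj x z then 0 else 1 := by
        intro z
        by_cases hxz : G.Adj x z
        · rw [if_pos hxz, zero_mul]
        · have hzy : ¬ G.Adj z y := htrans z x y (fun h => hxz h.symm) hxy
          rw [if_neg hxz, if_neg hzy, mul_one]
      simp_rw [hthis]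
      rw [mul_one, ← hpcard x]
      rw [Finset.sum_ite, Finset.sum_const, Finset.sum_const]
      simp
  -- the annihilating identity
  have hnr : (n : ℝ) = (k : ℝ) + (p : ℝ) := by
    rw [← hkp]; push_cast; ring
  have hid := matrix_identity A J B (n : ℝ) (k : ℝ) (p : ℝ) hAJB hJJ hBJ hJB hBB hnr
  -- eigenvalue analysis
  have hHerm : A.IsHermitian := adjMatrix_isHermitian G
  obtain ⟨i, hi⟩ : ∃ i : V, ∀ j : V, hHerm.eigenvalues i ≤ hHerm.eigenvalues j :=
    Finite.exists_min _
  have hmin : minEig G = hHerm.eigenvalues i := by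
    have h1 : minEig G = ⨅ j, hHerm.eigenvalues j := rfl
    rw [h1]
    exact le_antisymm (ciInf_le (Finite.bddBelow_range _) i) (le_ciInf hi)
  set μ := hHerm.eigenvalues i with hμ
  have hroot := eig_root A hHerm i (k : ℝ) (p : ℝ) hid
  have hμlt : μ < -2 := hmin ▸ heig.2
  have hμge : (-3 : ℝ) ≤ μ := hmin ▸ heig.1
  have hμp : μ = -(p : ℝ) := by
    rcases mul_eq_zero.mp hroot with h | h
    · linarith
    rcases mul_eq_zero.mp h with h | h
    · have : (0:ℝ) ≤ (k:ℝ) := Nat.cast_nonneg k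
      linarith
    · linarith
  have hp3 : p = 3 := by
    have h1 : (2 : ℝ) < (p : ℝ) := by
      rw [hμp] at hμlt; linarith
    have h2 : (p : ℝ) ≤ 3 := by
      rw [hμp] at hμge; linarith
    have h3 : 2 < p := by exact_mod_cast h1
    have h4 : p ≤ 3 := by exact_mod_cast h2
    omega
  -- build the setoid and quotient
  let s : Setoid V := ⟨fun x y => ¬G.Adj x y,
    ⟨fun x => G.loopless.irrefl x, fun {x y} h h2 => h h2.symm, fun {x y z} h1 h2 => htrans x y z h1 h2⟩⟩
  letI : DecidableRel s.r := fun a b => instDecidableNot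
  letI : DecidableEq (Quotient s) := inferInstance
  set Q := Quotient s with hQ
  set m := Fintype.card Q with hm
  have hfiber : ∀ q : Q, Fintype.card {x : V // Quotient.mk s x = q} = 3 := by
    intro q
    obtain ⟨a, rfl⟩ := q.exists_rep
    rw [Fintype.card_subtype]
    rw [← hp3, ← hpcard a]
    congr 1
    ext x
    simp only [Finset.mem_filter, Finset.mem_univ, true_and]
    rw [Quotient.eq]
    show (¬ G.Adj x a) ↔ ¬ G.Adj a x
    rw [G.adj_comm]
  let e0 : V ≃ Σ q : Q, {x : V // Quotient.mk s x = q} :=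
    (Equiv.sigmaFiberEquiv (fun x => Quotient.mk s x)).symm
  let eQ : Q ≃ Fin m := Fintype.equivFin Q
  let eF : ∀ q : Q, {x : V // Quotient.mk s x = q} ≃ Fin 3 :=
    fun q => Fintype.equivFinOfCardEq (hfiber q)
  let e : V ≃ Σ _ : Fin m, Fin 3 := e0.trans (Equiv.sigmaCongr eQ eF)
  have he1 : ∀ x : V, (e x).1 = eQ (Quotient.mk s x) := fun x => rfl
  refine ⟨m, ?_, ⟨⟨e, ?_⟩⟩⟩
  · have hcc := Fintype.card_congr e
    rw [hn] at hcc
    simp [Fintype.card_sigma] at hcc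
    omega
  · intro a b
    show (e a).1 ≠ (e b).1 ↔ G.Adj a b
    rw [he1, he1, Ne, EmbeddingLike.apply_eq_iff_eq, Quotient.eq]
    show ¬ (¬ G.Adj a b) ↔ _
    exact not_not
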